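/- Let μ ∈ (1,2) be rational, given as an irreducible fraction μ = c/d with c, d positive integers. Then for every integer k ≥ 2, |I_k| ≥ 1/(2 d^k). -/

import Mathlib

open Set MeasureTheory

/-- The tent map `f(x) = μx` for `x ≤ 1/2` and `μ(1-x)` for `x ≥ 1/2`. -/
noncomputable def tentMap (μ : ℝ) (x : ℝ) : ℝ :=
  if x ≤ 1/2 then μ * x else μ * (1 - x)

/-- `tentBit μ x k` is the `(k+1)`-st bit `b_{k+1}` of the tent code of `x`. -/
noncomputable def tentBit (μ x : ℝ) : ℕ → Bool
  | 0 => if 1/2 ≤ x then true else false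
  | k + 1 =>
    if (tentMap μ)^[k+1] x < 1/2 then tentBit μ x k
    else if 1/2 < (tentMap μ)^[k+1] x then !(tentBit μ x k)
    else true

/-- The tent code `γ^n(x) = b_1 ⋯ b_n`. -/
noncomputable def tentCode (μ : ℝ) (n : ℕ) (x : ℝ) : List Bool :=
  (List.range n).map (tentBit μ x)

/-- The tent language `L_n = {γ^n(x) : x ∈ [0,1)}`. -/
def tentLang (μ : ℝ) (n : ℕ) : Set (List Bool) :=
  {w | ∃ x ∈ Set.Ico (0:ℝ) 1, tentCode μ n x = w}

/-- The segment-type `T(w) = {f^n(x) : x ∈ [0,1), γ^n(x) = w}`. -/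
def segType (μ : ℝ) (n : ℕ) (w : List Bool) : Set ℝ :=
  {y | ∃ x ∈ Set.Ico (0:ℝ) 1, tentCode μ n x = w ∧ (tentMap μ)^[n] x = y}

/-- The set of segment-types `𝒯_n = {T(w) : w ∈ L_n}`. -/
def typeSet (μ : ℝ) (n : ℕ) : Set (Set ℝ) :=
  {S | ∃ w ∈ tentLang μ n, segType μ n w = S}

/-- `I_i = T(γ^i(1/2))`. -/
noncomputable def Iseg (μ : ℝ) (i : ℕ) : Set ℝ :=
  segType μ i (tentCode μ i (1/2))

/-- `Ī_i = T(c̄_i)` where `c̄_i` is the bitwise complement of `γ^i(1/2)`. -/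
noncomputable def Isegbar (μ : ℝ) (i : ℕ) : Set ℝ :=
  segType μ i ((tentCode μ i (1/2)).map (fun b => !b))

/-- The length of the interval `T(w)` (zero if `T(w)` is empty). -/
noncomputable def segLen (μ : ℝ) (n : ℕ) (w : List Bool) : ℝ :=
  (MeasureTheory.volume (segType μ n w)).toReal

lemma tentMap_of_le {μ x : ℝ} (h : x ≤ 1/2) : tentMap μ x = μ * x := if_pos h

lemma tentMap_of_ge {μ x : ℝ} (h : 1/2 ≤ x) : tentMap μ x = μ * (1 - x) := by
  rcases eq_or_lt_of_le h with h' | h'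
  · rw [tentMap, if_pos h'.ge, ← h']; norm_num
  · exact if_neg (not_le.mpr h')

lemma tent_rep {μ : ℝ} {c d : ℕ} (hd : 2 ≤ d) (hcd : Nat.Coprime c d)
    (hμ : μ = (c : ℝ) / d) :
    ∀ k, 1 ≤ k → ∃ n : ℤ, (tentMap μ)^[k] (1/2 : ℝ) = (n : ℝ) / (2 * (d:ℝ)^k)
      ∧ IsCoprime (n : ℤ) (d : ℤ) := by
  have hdR : (0:ℝ) < d := by exact_mod_cast (by omega : 0 < d)
  have hdne : (d:ℝ) ≠ 0 := ne_of_gt hdR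
  have hcop : IsCoprime (c : ℤ) (d : ℤ) := Int.isCoprime_iff_gcd_eq_one.mpr hcd
  intro k hk
  induction k, hk using Nat.le_induction with
  | base =>
    refine ⟨c, ?_, hcop⟩
    simp only [Function.iterate_one]
    rw [tentMap_of_le le_rfl, hμ]
    push_cast
    field_simp
  | succ n hn IH =>
    obtain ⟨m, hm, hmcop⟩ := IH
    have hpow : (0:ℝ) < (d:ℝ)^n := by positivity
    rw [Function.iterate_succ_apply', hm]
    by_cases h : ((m:ℝ) / (2 * (d:ℝ)^n)) ≤ 1/2
    · refine ⟨c * m, ?_, hcop.mul_left hmcop⟩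
      rw [tentMap_of_le h, hμ]
      push_cast
      field_simp
      ring_nf
    · obtain ⟨j, rfl⟩ : ∃ j, n = j + 1 := ⟨n - 1, by omega⟩
      refine ⟨c * (2 * d^(j+1) - m), ?_, ?_⟩
      · rw [tentMap_of_ge (le_of_lt (not_le.mp h)), hμ]
        push_cast
        field_simp
        ring_nf
      · refine (IsCoprime.mul_left hcop ?_)
        have : (2 * (d:ℤ)^(j+1) - m) = -m + d * (2 * d^j) := by ring
        rw [this]
        exact hmcop.neg_left.add_mul_left_left _

lemma tent_gap {μ : ℝ} {c d : ℕ} (hd : 2 ≤ d) (hcd : Nat.Coprime c d)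
    (hμ : μ = (c : ℝ) / d) :
    ∀ k, 1 ≤ k → 1/(2*(d:ℝ)^k) ≤ |(tentMap μ)^[k] (1/2 : ℝ) - 1/2| := by
  intro k hk
  obtain ⟨m, hm, hmcop⟩ := tent_rep hd hcd hμ k hk
  have hdR : (0:ℝ) < d := by exact_mod_cast (by omega : 0 < d)
  have hpow : (0:ℝ) < (d:ℝ)^k := by positivity
  have hne : m ≠ (d:ℤ)^k := by
    intro h
    have hdvd : (d:ℤ) ∣ m := h ▸ dvd_pow_self (d:ℤ) (by omega : k ≠ 0)
    have := hmcop.isUnit_of_dvd' hdvd dvd_rfl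
    rw [Int.isUnit_iff] at this
    omega
  have h1 : (1:ℤ) ≤ |m - (d:ℤ)^k| := Int.one_le_abs (sub_ne_zero.mpr hne)
  have h1R : (1:ℝ) ≤ |(m:ℝ) - (d:ℝ)^k| := by
    exact_mod_cast h1
  have heq : (tentMap μ)^[k] (1/2 : ℝ) - 1/2 = ((m:ℝ) - (d:ℝ)^k) / (2 * (d:ℝ)^k) := by
    rw [hm]; field_simp
  rw [heq, abs_div, abs_of_pos (by positivity : (0:ℝ) < 2 * (d:ℝ)^k)]
  exact (div_le_div_iff_of_pos_right (by positivity)).mpr h1R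

lemma tent_key {μ : ℝ} {d : ℕ} (hμ1 : 1 < μ) (hd : 2 ≤ d)
    (hgap : ∀ k, 1 ≤ k → 1/(2*(d:ℝ)^k) ≤ |(tentMap μ)^[k] (1/2 : ℝ) - 1/2|) :
    ∀ k, 1 ≤ k → ∃ ε s : ℝ, 0 < ε ∧ ε ≤ 1/2 ∧ (s = 1 ∨ s = -1) ∧
      (∀ t : ℝ, 0 ≤ t → t < ε → ∀ i, i < k → tentBit μ (1/2 + t) i = tentBit μ (1/2) i) ∧
      (∀ t : ℝ, 0 ≤ t → t < ε →
        (tentMap μ)^[k] (1/2 + t) = (tentMap μ)^[k] (1/2 : ℝ) + s * (μ^k * t)) ∧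
      1/(2*(d:ℝ)^k) ≤ μ^k * ε := by
  have hμ0 : (0:ℝ) < μ := lt_trans one_pos hμ1
  have hdR : (1:ℝ) ≤ d := by exact_mod_cast (by omega : 1 ≤ d)
  intro k hk
  induction k, hk using Nat.le_induction with
  | base =>
    refine ⟨1/2, -1, by norm_num, le_refl _, Or.inr rfl, ?_, ?_, ?_⟩
    · intro t ht _ i hi
      interval_cases i
      simp [tentBit, le_add_of_nonneg_right ht]
    · intro t ht htl
      simp only [Function.iterate_one]
      rw [tentMap_of_ge (by linarith), tentMap_of_ge le_rfl]
      ring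
    · rw [pow_one, pow_one]
      have h1 : 1/(2*(d:ℝ)) ≤ 1/2 := by
        rw [div_le_div_iff₀ (by linarith) (by norm_num)]
        linarith
      nlinarith
  | succ n hn IH =>
    obtain ⟨ε, s, hε0, hε2, hs, hbits, hform, hbound⟩ := IH
    set z : ℝ := (tentMap μ)^[n] (1/2) with hzdef
    have hgapn := hgap n hn
    have hgap0 : (0:ℝ) < |z - 1/2| := lt_of_lt_of_le (by positivity) hgapn
    have hzne : z ≠ 1/2 := by
      intro h; rw [h] at hgap0; simp at hgap0
    have hμk : (0:ℝ) < μ^n := pow_pos hμ0 n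
    set ε' : ℝ := min ε (|z - 1/2| / μ^n) with hε'def
    have hε'0 : 0 < ε' := lt_min hε0 (by positivity)
    have hε'ε : ε' ≤ ε := min_le_left _ _
    have habs : ∀ t : ℝ, 0 ≤ t → t < ε' → μ^n * t < |z - 1/2| := by
      intro t ht htl
      have h2 : t < |z - 1/2| / μ^n := lt_of_lt_of_le htl (min_le_right _ _)
      calc μ^n * t < μ^n * (|z - 1/2| / μ^n) := by
            exact mul_lt_mul_of_pos_left h2 hμk
        _ = |z - 1/2| := by field_simp
    have hsabs : ∀ t : ℝ, 0 ≤ t → -(μ^n * t) ≤ s * (μ^n * t) ∧ s * (μ^n * t) ≤ μ^n * t := by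
      intro t ht
      have h3 : 0 ≤ μ^n * t := by positivity
      rcases hs with rfl | rfl <;> constructor <;> linarith
    obtain ⟨j, rfl⟩ : ∃ j, n = j + 1 := ⟨n - 1, by omega⟩
    -- the two sides
    rcases lt_or_gt_of_ne hzne with hlt | hgt
    · -- z < 1/2, stays left, s' = s
      have hside : ∀ t : ℝ, 0 ≤ t → t < ε' → z + s * (μ^(j+1) * t) < 1/2 := by
        intro t ht htl
        have := (hsabs t ht).2
        have h4 := habs t ht htl
        rw [abs_of_neg (by linarith : z - 1/2 < 0)] at h4
        linarith
      refine ⟨ε', s, hε'0, le_trans hε'ε hε2, hs, ?_, ?_, ?_⟩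
      · intro t ht htl i hi
        rcases Nat.lt_succ_iff_lt_or_eq.mp hi with hi' | rfl
        · exact hbits t ht (lt_of_lt_of_le htl hε'ε) i hi'
        · have hfx : (tentMap μ)^[j+1] (1/2 + t) = z + s * (μ^(j+1) * t) :=
            hform t ht (lt_of_lt_of_le htl hε'ε)
          have h5 : (tentMap μ)^[j+1] (1/2 + t) < 1/2 := by rw [hfx]; exact hside t ht htl
          have h6 : (tentMap μ)^[j+1] (1/2 : ℝ) < 1/2 := hlt
          rw [show tentBit μ (1/2 + t) (j+1) = if (tentMap μ)^[j+1] (1/2 + t) < 1/2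
              then tentBit μ (1/2 + t) j else if 1/2 < (tentMap μ)^[j+1] (1/2 + t)
              then !(tentBit μ (1/2 + t) j) else true from rfl]
          rw [show tentBit μ (1/2 : ℝ) (j+1) = if (tentMap μ)^[j+1] (1/2 : ℝ) < 1/2
              then tentBit μ (1/2 : ℝ) j else if 1/2 < (tentMap μ)^[j+1] (1/2 : ℝ)
              then !(tentBit μ (1/2 : ℝ) j) else true from rfl]
          rw [if_pos h5, if_pos h6]
          exact hbits t ht (lt_of_lt_of_le htl hε'ε) j (Nat.lt_succ_self j)
      · intro t ht htl
        have hfx : (tentMap μ)^[j+1] (1/2 + t) = z + s * (μ^(j+1) * t) :=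
          hform t ht (lt_of_lt_of_le htl hε'ε)
        have e1 : (tentMap μ)^[j+1+1] (1/2 + t) = tentMap μ ((tentMap μ)^[j+1] (1/2 + t)) :=
          Function.iterate_succ_apply' _ _ _
        have e2 : (tentMap μ)^[j+1+1] (1/2 : ℝ) = tentMap μ z :=
          Function.iterate_succ_apply' _ _ _
        rw [e1, e2, hfx, tentMap_of_le (le_of_lt (hside t ht htl)), tentMap_of_le (le_of_lt hlt),
          pow_succ]
        ring
      · -- bound
        have hlow : 1/(2*(d:ℝ)^(j+1)) ≤ μ^(j+1) * ε' := by
          rcases min_cases ε (|z - 1/2| / μ^(j+1)) with ⟨hmin, _⟩ | ⟨hmin, _⟩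
          · rw [hε'def, hmin]; exact hbound
          · rw [hε'def, hmin]
            calc 1/(2*(d:ℝ)^(j+1)) ≤ |z - 1/2| := hgapn
              _ = μ^(j+1) * (|z - 1/2| / μ^(j+1)) := by field_simp
        have hpw : (d:ℝ)^(j+1) ≤ (d:ℝ)^(j+1+1) := by
          have := pow_pos (by linarith : (0:ℝ) < (d:ℝ)) (j+1)
          calc (d:ℝ)^(j+1) = (d:ℝ)^(j+1) * 1 := by ring
            _ ≤ (d:ℝ)^(j+1) * d := by nlinarith
            _ = (d:ℝ)^(j+1+1) := (pow_succ _ _).symm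
        have h8 : 1/(2*(d:ℝ)^(j+1+1)) ≤ 1/(2*(d:ℝ)^(j+1)) := by
          apply div_le_div_of_nonneg_left (by norm_num) (by positivity)
          linarith
        calc 1/(2*(d:ℝ)^(j+1+1)) ≤ 1/(2*(d:ℝ)^(j+1)) := h8
          _ ≤ μ^(j+1) * ε' := hlow
          _ ≤ μ^(j+1+1) * ε' := by
              have hps : μ^(j+1+1) = μ^(j+1) * μ := pow_succ _ _
              rw [hps]
              nlinarith [mul_pos hμk hε'0]
    · -- z > 1/2, stays right, s' = -s
      have hside : ∀ t : ℝ, 0 ≤ t → t < ε' → 1/2 < z + s * (μ^(j+1) * t) := by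
        intro t ht htl
        have := (hsabs t ht).1
        have h4 := habs t ht htl
        rw [abs_of_pos (by linarith : 0 < z - 1/2)] at h4
        linarith
      refine ⟨ε', -s, hε'0, le_trans hε'ε hε2, by rcases hs with rfl | rfl <;> simp, ?_, ?_, ?_⟩
      · intro t ht htl i hi
        rcases Nat.lt_succ_iff_lt_or_eq.mp hi with hi' | rfl
        · exact hbits t ht (lt_of_lt_of_le htl hε'ε) i hi'
        · have hfx : (tentMap μ)^[j+1] (1/2 + t) = z + s * (μ^(j+1) * t) :=
            hform t ht (lt_of_lt_of_le htl hε'ε)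
          have h5 : 1/2 < (tentMap μ)^[j+1] (1/2 + t) := by rw [hfx]; exact hside t ht htl
          have h6 : 1/2 < (tentMap μ)^[j+1] (1/2 : ℝ) := hgt
          rw [show tentBit μ (1/2 + t) (j+1) = if (tentMap μ)^[j+1] (1/2 + t) < 1/2
              then tentBit μ (1/2 + t) j else if 1/2 < (tentMap μ)^[j+1] (1/2 + t)
              then !(tentBit μ (1/2 + t) j) else true from rfl]
          rw [show tentBit μ (1/2 : ℝ) (j+1) = if (tentMap μ)^[j+1] (1/2 : ℝ) < 1/2
              then tentBit μ (1/2 : ℝ) j else if 1/2 < (tentMap μ)^[j+1] (1/2 : ℝ)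
              then !(tentBit μ (1/2 : ℝ) j) else true from rfl]
          rw [if_neg (not_lt.mpr (le_of_lt h5)), if_neg (not_lt.mpr (le_of_lt h6)),
            if_pos h5, if_pos h6]
          rw [hbits t ht (lt_of_lt_of_le htl hε'ε) j (Nat.lt_succ_self j)]
      · intro t ht htl
        have hfx : (tentMap μ)^[j+1] (1/2 + t) = z + s * (μ^(j+1) * t) :=
          hform t ht (lt_of_lt_of_le htl hε'ε)
        have e1 : (tentMap μ)^[j+1+1] (1/2 + t) = tentMap μ ((tentMap μ)^[j+1] (1/2 + t)) :=
          Function.iterate_succ_apply' _ _ _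
        have e2 : (tentMap μ)^[j+1+1] (1/2 : ℝ) = tentMap μ z :=
          Function.iterate_succ_apply' _ _ _
        rw [e1, e2, hfx, tentMap_of_ge (le_of_lt (hside t ht htl)), tentMap_of_ge (le_of_lt hgt),
          pow_succ]
        ring
      · have hlow : 1/(2*(d:ℝ)^(j+1)) ≤ μ^(j+1) * ε' := by
          rcases min_cases ε (|z - 1/2| / μ^(j+1)) with ⟨hmin, _⟩ | ⟨hmin, _⟩
          · rw [hε'def, hmin]; exact hbound
          · rw [hε'def, hmin]
            calc 1/(2*(d:ℝ)^(j+1)) ≤ |z - 1/2| := hgapn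
              _ = μ^(j+1) * (|z - 1/2| / μ^(j+1)) := by field_simp
        have hpw : (d:ℝ)^(j+1) ≤ (d:ℝ)^(j+1+1) := by
          have := pow_pos (by linarith : (0:ℝ) < (d:ℝ)) (j+1)
          calc (d:ℝ)^(j+1) = (d:ℝ)^(j+1) * 1 := by ring
            _ ≤ (d:ℝ)^(j+1) * d := by nlinarith
            _ = (d:ℝ)^(j+1+1) := (pow_succ _ _).symm
        have h8 : 1/(2*(d:ℝ)^(j+1+1)) ≤ 1/(2*(d:ℝ)^(j+1)) := by
          apply div_le_div_of_nonneg_left (by norm_num) (by positivity)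
          linarith
        calc 1/(2*(d:ℝ)^(j+1+1)) ≤ 1/(2*(d:ℝ)^(j+1)) := h8
          _ ≤ μ^(j+1) * ε' := hlow
          _ ≤ μ^(j+1+1) * ε' := by
              have hps : μ^(j+1+1) = μ^(j+1) * μ := pow_succ _ _
              rw [hps]
              nlinarith [mul_pos hμk hε'0]

/-- for rational `μ = c/d` in lowest terms, `|I_k| ≥ 1/(2 d^k)` for `k ≥ 2`. -/
theorem Iseg_length_lower_bound (μ : ℝ) (hμ1 : 1 < μ) (hμ2 : μ < 2)
    (c d : ℕ) (hc : 0 < c) (hd : 0 < d) (hcd : Nat.Coprime c d)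
    (hμ : μ = (c : ℝ) / d) (k : ℕ) (hk : 2 ≤ k) :
    1 / (2 * (d : ℝ) ^ k) ≤ (volume (Iseg μ k)).toReal := by
  have hd2 : 2 ≤ d := by
    by_contra h
    have hd1 : d = 1 := by omega
    rw [hd1] at hμ
    norm_num at hμ
    have h1 : 1 < c := by exact_mod_cast (hμ ▸ hμ1)
    have h2 : c < 2 := by exact_mod_cast (hμ ▸ hμ2)
    omega
  have hμ0 : (0:ℝ) < μ := lt_trans one_pos hμ1
  have hgap := tent_gap hd2 hcd hμ
  obtain ⟨ε, s, hε0, hε2, hs, hbits, hform, hbound⟩ :=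
    tent_key hμ1 hd2 hgap k (by omega)
  set z : ℝ := (tentMap μ)^[k] (1/2) with hz
  have hμk : (0:ℝ) < μ^k := pow_pos hμ0 k
  have hmem : ∀ t : ℝ, 0 ≤ t → t < ε → z + s * (μ^k * t) ∈ Iseg μ k := by
    intro t ht htl
    refine ⟨1/2 + t, ⟨by linarith, by linarith⟩, ?_, hform t ht htl⟩
    unfold tentCode
    apply List.map_congr_left
    intro i hi
    exact hbits t ht htl i (List.mem_range.mp hi)
  have hvol : ENNReal.ofReal (μ^k * ε) ≤ volume (Iseg μ k) := by
    rcases hs with rfl | rfl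
    · have hsub : Ico z (z + μ^k * ε) ⊆ Iseg μ k := by
        intro y hy
        obtain ⟨hy1, hy2⟩ := hy
        have ht0 : 0 ≤ (y - z) / μ^k := div_nonneg (by linarith) hμk.le
        have htε : (y - z) / μ^k < ε := by
          rw [div_lt_iff₀ hμk]
          nlinarith
        have hm := hmem _ ht0 htε
        have hyt : z + 1 * (μ^k * ((y - z) / μ^k)) = y := by field_simp; ring
        rwa [hyt] at hm
      calc ENNReal.ofReal (μ^k*ε) = volume (Ico z (z + μ^k*ε)) := by
            rw [Real.volume_Ico]; congr 1; ring
        _ ≤ volume (Iseg μ k) := measure_mono hsub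
    · have hsub : Ioc (z - μ^k * ε) z ⊆ Iseg μ k := by
        intro y hy
        obtain ⟨hy1, hy2⟩ := hy
        have ht0 : 0 ≤ (z - y) / μ^k := div_nonneg (by linarith) hμk.le
        have htε : (z - y) / μ^k < ε := by
          rw [div_lt_iff₀ hμk]
          nlinarith
        have hm := hmem _ ht0 htε
        have hyt : z + (-1) * (μ^k * ((z - y) / μ^k)) = y := by field_simp; ring
        rwa [hyt] at hm
      calc ENNReal.ofReal (μ^k*ε) = volume (Ioc (z - μ^k*ε) z) := by
            rw [Real.volume_Ioc]; congr 1; ring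
        _ ≤ volume (Iseg μ k) := measure_mono hsub
  have hmaps : ∀ x ∈ Icc (0:ℝ) 1, tentMap μ x ∈ Icc (0:ℝ) 1 := by
    intro x hx
    obtain ⟨h0, h1⟩ := hx
    unfold tentMap
    split <;> constructor <;> nlinarith
  have hiter : ∀ n : ℕ, ∀ x ∈ Icc (0:ℝ) 1, (tentMap μ)^[n] x ∈ Icc (0:ℝ) 1 := by
    intro n
    induction n with
    | zero => simp
    | succ m IH =>
      intro x hx
      rw [Function.iterate_succ_apply']
      exact hmaps _ (IH x hx)
  have hIsub : Iseg μ k ⊆ Icc (0:ℝ) 1 := by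
    rintro y ⟨x, hx, -, rfl⟩
    exact hiter k x ⟨hx.1, hx.2.le⟩
  have hfin : volume (Iseg μ k) ≠ ⊤ := by
    have h1 : volume (Iseg μ k) ≤ volume (Icc (0:ℝ) 1) := measure_mono hIsub
    rw [Real.volume_Icc] at h1
    exact ne_top_of_le_ne_top (by norm_num) h1
  have h2 := ENNReal.toReal_mono hfin hvol
  rw [ENNReal.toReal_ofReal (by positivity)] at h2
  linarith
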